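/- Let d = 3 and let Q be the symmetric Markov generator with off-diagonal entries Q₁₂ = Q₂₁ = α, Q₁₃ = Q₃₁ = β, Q₂₃ = Q₃₂ = γ (and diagonal entries making row sums zero), where α, β, γ ≥ 0 are not all equal. Set Δ = α + β + γ and s = √(α² + β² + γ² − αβ − βγ − γα) > 0. Then exp(Q) = (1 − (sinh(s)/s)·Δ·e^{−Δ})·I₃ − cosh(s)·e^{−Δ}·J₃ + (sinh(s)/s)·e^{−Δ}·S, where I₃ is the 3×3 matrix with all entries 1/3, J₃ = I₃ − 1 (with 1 the identity), and S is the circulant-type matrix with rows (γ, α, β), (α, β, γ), (β, γ, α). -/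

import Mathlib

set_option maxHeartbeats 1000000
open NormedSpace

theorem exp_smul_of_idem' {𝔸 : Type*} [NormedRing 𝔸] [NormedAlgebra ℝ 𝔸] [CompleteSpace 𝔸]
    (c : ℝ) (P : 𝔸) (hP : P * P = P) :
    exp (c • P) = 1 + (Real.exp c - 1) • P := by
  have hPn : ∀ n : ℕ, P ^ (n + 1) = P := by
    intro n; induction n with
    | zero => simp
    | succ k ih => rw [pow_succ, ih, hP]
  have hfun : (fun n : ℕ => ((Nat.factorial n : ℝ)⁻¹) • (c • P) ^ n)
      = fun n : ℕ => ((c ^ n / (Nat.factorial n)) • P + if n = 0 then 1 - P else 0) := by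
    funext n
    cases n with
    | zero => simp
    | succ k =>
      simp [smul_pow, hPn, smul_smul, div_eq_mul_inv, mul_comm]
  have hsum1 : Summable fun n : ℕ => (c ^ n / (Nat.factorial n) : ℝ) :=
    Real.summable_pow_div_factorial c
  rw [exp_eq_tsum (𝕂 := ℝ)]; simp only []; rw [hfun, Summable.tsum_add (hsum1.smul_const P)
      (summable_of_ne_finset_zero (s := {0}) (by intro n hn; simp at hn; simp [hn]))]
  have h2 : (∑' n : ℕ, if n = 0 then (1 : 𝔸) - P else 0) = 1 - P :=
    tsum_eq_single 0 (by intro n hn; simp [hn])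
  rw [Summable.tsum_smul_const hsum1, h2]
  have : (∑' n : ℕ, (c ^ n / (Nat.factorial n) : ℝ)) = Real.exp c := by
    rw [Real.exp_eq_exp_ℝ, exp_eq_tsum_div]
  rw [this, sub_smul, one_smul]
  abel

theorem Matrix.exp_smul_of_idem (c : ℝ) (P : Matrix (Fin 3) (Fin 3) ℝ) (hP : P * P = P) :
    exp (c • P) = 1 + (Real.exp c - 1) • P := by
  letI : SeminormedRing (Matrix (Fin 3) (Fin 3) ℝ) := Matrix.linftyOpSemiNormedRing
  letI : NormedRing (Matrix (Fin 3) (Fin 3) ℝ) := Matrix.linftyOpNormedRing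
  letI : NormedAlgebra ℝ (Matrix (Fin 3) (Fin 3) ℝ) := Matrix.linftyOpNormedAlgebra
  exact exp_smul_of_idem' c P hP

theorem exp_symmetric_generator_three_dim (α β γ : ℝ)
    (hα : 0 ≤ α) (hβ : 0 ≤ β) (hγ : 0 ≤ γ)
    (hne : ¬(α = β ∧ β = γ))
    (Q : Matrix (Fin 3) (Fin 3) ℝ)
    (hQ : Q = !![-α - β, α, β; α, -α - γ, γ; β, γ, -β - γ])
    (Δ s : ℝ) (hΔ : Δ = α + β + γ)
    (hs : s = Real.sqrt (α ^ 2 + β ^ 2 + γ ^ 2 - α * β - β * γ - γ * α))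
    (I₃ J₃ S : Matrix (Fin 3) (Fin 3) ℝ)
    (hI : I₃ = Matrix.of fun _ _ => (1 / 3 : ℝ))
    (hJ : J₃ = I₃ - 1)
    (hS : S = !![γ, α, β; α, β, γ; β, γ, α]) :
    0 < s ∧
    NormedSpace.exp Q =
      (1 - (Real.sinh s / s) * Δ * Real.exp (-Δ)) • I₃ -
        (Real.cosh s * Real.exp (-Δ)) • J₃ +
        ((Real.sinh s / s) * Real.exp (-Δ)) • S := by
  have hnn : 0 ≤ α ^ 2 + β ^ 2 + γ ^ 2 - α * β - β * γ - γ * α := by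
    nlinarith [sq_nonneg (α - β), sq_nonneg (β - γ), sq_nonneg (γ - α)]
  have hpos : 0 < α ^ 2 + β ^ 2 + γ ^ 2 - α * β - β * γ - γ * α := by
    rcases not_and_or.mp hne with h | h
    · have h' : α - β ≠ 0 := sub_ne_zero.mpr h
      have : 0 < (α - β) ^ 2 := by positivity
      nlinarith [sq_nonneg (β - γ), sq_nonneg (γ - α)]
    · have h' : β - γ ≠ 0 := sub_ne_zero.mpr h
      have : 0 < (β - γ) ^ 2 := by positivity
      nlinarith [sq_nonneg (α - β), sq_nonneg (γ - α)]
  have hspos : 0 < s := hs ▸ Real.sqrt_pos.mpr hpos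
  have hsne : s ≠ 0 := ne_of_gt hspos
  have hs2 : s ^ 2 = α ^ 2 + β ^ 2 + γ ^ 2 - α * β - β * γ - γ * α := by
    rw [hs, Real.sq_sqrt hnn]
  refine ⟨hspos, ?_⟩
  obtain ⟨P, hPdef⟩ : ∃ P : Matrix (Fin 3) (Fin 3) ℝ,
      P = !![2/3, -1/3, -1/3; -1/3, 2/3, -1/3; -1/3, -1/3, 2/3] := ⟨_, rfl⟩
  obtain ⟨R, hRdef⟩ : ∃ R : Matrix (Fin 3) (Fin 3) ℝ,
      R = !![(2*γ-α-β)/3, (2*α-β-γ)/3, (2*β-α-γ)/3;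
       (2*α-β-γ)/3, (2*β-α-γ)/3, (2*γ-α-β)/3;
       (2*β-α-γ)/3, (2*γ-α-β)/3, (2*α-β-γ)/3] := ⟨_, rfl⟩
  have hPI : P = 1 - I₃ := by
    subst hI
    rw [hPdef]
    ext i j
    fin_cases i <;> fin_cases j <;>
      norm_num [Matrix.one_apply, Matrix.vecHead, Matrix.vecTail, Fin.ext_iff]
  have hRSI : R = S - Δ • I₃ := by
    subst hI hS hΔ
    rw [hRdef]
    ext i j
    fin_cases i <;> fin_cases j <;>
      simp [Matrix.smul_apply, smul_eq_mul, Matrix.vecHead, Matrix.vecTail] <;> ring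
  have hPP : P * P = P := by
    rw [hPdef]
    ext i j
    fin_cases i <;> fin_cases j <;>
      · norm_num [Matrix.mul_apply, Fin.sum_univ_three, Matrix.vecHead, Matrix.vecTail, Matrix.cons_val_two]
  have hPR : P * R = R := by
    rw [hPdef, hRdef]
    ext i j
    fin_cases i <;> fin_cases j <;>
      · simp [Matrix.mul_apply, Fin.sum_univ_three, Matrix.vecHead, Matrix.vecTail]
        ring
  have hRP : R * P = R := by
    rw [hPdef, hRdef]
    ext i j
    fin_cases i <;> fin_cases j <;>
      · simp [Matrix.mul_apply, Fin.sum_univ_three, Matrix.vecHead, Matrix.vecTail]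
        ring
  have hRR : R * R = (s ^ 2) • P := by
    rw [hs2, hPdef, hRdef]
    ext i j
    fin_cases i <;> fin_cases j <;>
      · simp [Matrix.mul_apply, Fin.sum_univ_three, Matrix.smul_apply, smul_eq_mul,
          Matrix.vecHead, Matrix.vecTail]
        ring
  have hQPR : Q = (-Δ) • P + R := by
    subst hQ hΔ
    rw [hPdef, hRdef]
    ext i j
    fin_cases i <;> fin_cases j <;>
      · simp [Matrix.smul_apply, smul_eq_mul, Matrix.vecHead, Matrix.vecTail]
        ring
  obtain ⟨Pp, hPp⟩ : ∃ Pp : Matrix (Fin 3) (Fin 3) ℝ, Pp = (2⁻¹ : ℝ) • P + (2 * s)⁻¹ • R := ⟨_, rfl⟩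
  obtain ⟨Pm, hPm⟩ : ∃ Pm : Matrix (Fin 3) (Fin 3) ℝ, Pm = (2⁻¹ : ℝ) • P - (2 * s)⁻¹ • R := ⟨_, rfl⟩
  have hpp : Pp * Pp = Pp := by
    rw [hPp]
    rw [add_mul, mul_add, mul_add, smul_mul_assoc, smul_mul_assoc, smul_mul_assoc,
      smul_mul_assoc, mul_smul_comm, mul_smul_comm, mul_smul_comm, mul_smul_comm,
      hPP, hPR, hRP, hRR]
    match_scalars <;> field_simp <;> ring
  have hmm : Pm * Pm = Pm := by
    rw [hPm]
    rw [sub_mul, mul_sub, mul_sub, smul_mul_assoc, smul_mul_assoc, smul_mul_assoc,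
      smul_mul_assoc, mul_smul_comm, mul_smul_comm, mul_smul_comm, mul_smul_comm,
      hPP, hPR, hRP, hRR]
    match_scalars <;> field_simp <;> ring
  have hpm : Pp * Pm = 0 := by
    rw [hPp, hPm]
    rw [add_mul, mul_sub, mul_sub, smul_mul_assoc, smul_mul_assoc, smul_mul_assoc,
      smul_mul_assoc, mul_smul_comm, mul_smul_comm, mul_smul_comm, mul_smul_comm,
      hPP, hPR, hRP, hRR]
    match_scalars <;> field_simp <;> ring
  have hmp : Pm * Pp = 0 := by
    rw [hPp, hPm]
    rw [sub_mul, mul_add, mul_add, smul_mul_assoc, smul_mul_assoc, smul_mul_assoc,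
      smul_mul_assoc, mul_smul_comm, mul_smul_comm, mul_smul_comm, mul_smul_comm,
      hPP, hPR, hRP, hRR]
    match_scalars <;> field_simp <;> ring
  have hQd : Q = (-Δ + s) • Pp + (-Δ - s) • Pm := by
    rw [hQPR, hPp, hPm]
    match_scalars <;> field_simp <;> ring
  have hcomm : Commute ((-Δ + s) • Pp) ((-Δ - s) • Pm) := by
    have hc : Commute Pp Pm := by
      unfold Commute SemiconjBy
      rw [hpm, hmp]
    exact (hc.smul_left _).smul_right _
  rw [hQd, Matrix.exp_add_of_commute _ _ hcomm,
    Matrix.exp_smul_of_idem _ _ hpp, Matrix.exp_smul_of_idem _ _ hmm]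
  simp only [add_mul, mul_add, one_mul, mul_one, smul_mul_assoc, mul_smul_comm, hpm,
    smul_zero, add_zero]
  rw [hJ, hPp, hPm, hPI, hRSI]
  match_scalars <;>
  · simp only [Real.cosh_eq, Real.sinh_eq, sub_eq_add_neg, Real.exp_add, neg_neg]
    field_simp
    ring
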